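/- For the classical principal series shift-operator action of sl(n), the Serre relations E_i²E_{i+1} - 2E_iE_{i+1}E_i + E_{i+1}E_i² = 0 and E_{i+1}²E_i - 2E_{i+1}E_iE_{i+1} + E_iE_{i+1}² = 0 hold, and similarly for the F_i. -/
import Mathlib


noncomputable section
open Finset

/-- The variable `u_{p,q}`, with the convention that `u_{p,q} = 0` unless
`1 ≤ p < q ≤ n` (in particular `u_{0,j} = u_{k,k} = 0`). -/
def mval (n : ℕ) (u : ℕ × ℕ → ℂ) (p q : ℕ) : ℂ :=
  if 1 ≤ p ∧ p < q ∧ q ≤ n then u (p, q) else 0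

/-- The unit shift vector in the coordinate `u_{p,q}`; it vanishes (the shift is
non-existent) unless `1 ≤ p < q ≤ n`. -/
def uvec (n : ℕ) (p q : ℕ) : ℕ × ℕ → ℂ :=
  fun x => if x = (p, q) ∧ 1 ≤ p ∧ p < q ∧ q ≤ n then 1 else 0

/-- The shift vector `e_{E_i}^k`: shifts `u_{k-1,i+k-1}` by `+1`, `u_{k-1,i+k}` by `-1`,
`u_{k,i+k-1}` by `-1`, `u_{k,i+k}` by `+1`. -/
def eShift (n i k : ℕ) : ℕ × ℕ → ℂ :=
  uvec n (k - 1) (i + k - 1) - uvec n (k - 1) (i + k) - uvec n k (i + k - 1) + uvec n k (i + k)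

/-- The shift vector `e_{F_i}^k`: shifts `u_{k-1,i-1}` by `-1`, `u_{k-1,i}` by `+1`,
`u_{k,i}` by `+1`, `u_{k,i+1}` by `-1`. -/
def fShift (n i k : ℕ) : ℕ × ℕ → ℂ :=
  uvec n (k - 1) i + uvec n k i - uvec n (k - 1) (i - 1) - uvec n k (i + 1)

/-- The coefficient `E_i^k(u) = 1 + Σ_{j=k}^{n-i} u_{j,i+j}`. -/
def Ecoef (n i k : ℕ) (u : ℕ × ℕ → ℂ) : ℂ :=
  1 + ∑ j ∈ Icc k (n - i), mval n u j (i + j)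

/-- The coefficient `F_i^k(u) = 1 + Σ_{j=k}^{i} u_{j,i} - Σ_{j=i+1}^{n} u_{i,j} + 2λ_i`. -/
def Fcoef (n i k : ℕ) (lam : ℂ) (u : ℕ × ℕ → ℂ) : ℂ :=
  1 + ∑ j ∈ Icc k i, mval n u j i - ∑ j ∈ Icc (i + 1) n, mval n u i j + 2 * lam

/-- The coefficient
`h_i(u) = Σ_{j=1}^{i-1} u_{j,i} - Σ_{j=i+1}^{n} u_{i,j} - Σ_{j=1}^{n-i} u_{j,i+j} + 2λ_i`. -/
def Hcoef (n i : ℕ) (lam : ℂ) (u : ℕ × ℕ → ℂ) : ℂ :=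
  ∑ j ∈ Icc 1 (i - 1), mval n u j i - ∑ j ∈ Icc (i + 1) n, mval n u i j
    - ∑ j ∈ Icc 1 (n - i), mval n u j (i + j) + 2 * lam

/-- The shift operator `E_i·f(u) = Σ_{k=1}^{n-i} E_i^k(u) f(u + e_{E_i}^k)`. -/
def Eop (n i : ℕ) (f : (ℕ × ℕ → ℂ) → ℂ) : (ℕ × ℕ → ℂ) → ℂ :=
  fun u => ∑ k ∈ Icc 1 (n - i), Ecoef n i k u * f (u + eShift n i k)

/-- The shift operator `F_i·f(u) = Σ_{k=1}^{i} F_i^k(u) f(u + e_{F_i}^k)`. -/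
def Fop (n i : ℕ) (lam : ℂ) (f : (ℕ × ℕ → ℂ) → ℂ) : (ℕ × ℕ → ℂ) → ℂ :=
  fun u => ∑ k ∈ Icc 1 i, Fcoef n i k lam u * f (u + fShift n i k)

/-- The multiplication operator `H_i·f(u) = h_i(u) f(u)`. -/
def Hop (n i : ℕ) (lam : ℂ) (f : (ℕ × ℕ → ℂ) → ℂ) : (ℕ × ℕ → ℂ) → ℂ :=
  fun u => Hcoef n i lam u * f u

/-- The Cartan matrix of type `A_{n-1}`. -/
def cartan (i j : ℕ) : ℂ :=
  if i = j then 2 else if i + 1 = j ∨ j + 1 = i then -1 else 0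

/-! ### Auxiliary lemmas -/

lemma mval_add (n : ℕ) (u v : ℕ × ℕ → ℂ) (p q : ℕ) :
    mval n (u + v) p q = mval n u p q + mval n v p q := by
  simp only [mval, Pi.add_apply]; split_ifs <;> simp

lemma mval_sub (n : ℕ) (u v : ℕ × ℕ → ℂ) (p q : ℕ) :
    mval n (u - v) p q = mval n u p q - mval n v p q := by
  simp only [mval, Pi.sub_apply]; split_ifs <;> simp

lemma mval_uvec (n p q r s : ℕ) :
    mval n (uvec n p q) r s
      = if r = p ∧ s = q ∧ 1 ≤ p ∧ p < q ∧ q ≤ n then 1 else 0 := by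
  simp only [mval, uvec, Prod.mk.injEq]
  split_ifs with h1 h2 h3 <;> first | rfl | (exfalso; tauto) | skip
  · obtain ⟨rfl, rfl, h⟩ := ‹r = p ∧ s = q ∧ 1 ≤ p ∧ p < q ∧ q ≤ n›; exact absurd h h1

lemma sum_ite_fst (A B p : ℕ) (P : ℕ → Prop) [DecidablePred P] :
    (∑ j ∈ Icc A B, if j = p ∧ P j then (1:ℂ) else 0)
      = if A ≤ p ∧ p ≤ B ∧ P p then 1 else 0 := by
  have h1 : ∀ j ∈ Icc A B, (if j = p ∧ P j then (1:ℂ) else 0)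
      = if j = p then (if P j then (1:ℂ) else 0) else 0 := by
    intro j _; split_ifs <;> tauto
  rw [Finset.sum_congr rfl h1, Finset.sum_ite_eq' (Icc A B) p
      (fun j => if P j then (1:ℂ) else 0)]
  simp only [mem_Icc]
  split_ifs <;> tauto

lemma sum_mval_uvec_fst (n A B p q : ℕ) (g : ℕ → ℕ) :
    (∑ j ∈ Icc A B, mval n (uvec n p q) j (g j))
      = if A ≤ p ∧ p ≤ B ∧ (g p = q ∧ 1 ≤ p ∧ p < q ∧ q ≤ n) then 1 else 0 := by
  simp only [mval_uvec]
  exact sum_ite_fst A B p (fun j => g j = q ∧ 1 ≤ p ∧ p < q ∧ q ≤ n)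

lemma sum_mval_uvec_snd (n A B c p q : ℕ) :
    (∑ j ∈ Icc A B, mval n (uvec n p q) c j)
      = if A ≤ q ∧ q ≤ B ∧ (c = p ∧ 1 ≤ p ∧ p < q ∧ q ≤ n) then 1 else 0 := by
  simp only [mval_uvec]
  rw [Finset.sum_congr rfl (fun j _ => show _ =
      (if j = q ∧ (c = p ∧ 1 ≤ p ∧ p < q ∧ q ≤ n) then (1:ℂ) else 0) by split_ifs <;> tauto)]
  exact sum_ite_fst A B q (fun _ => c = p ∧ 1 ≤ p ∧ p < q ∧ q ≤ n)

lemma Ecoef_add (n i l : ℕ) (u w : ℕ × ℕ → ℂ) :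
    Ecoef n i l (u + w) = Ecoef n i l u + ∑ j ∈ Icc l (n - i), mval n w j (i + j) := by
  simp only [Ecoef, mval_add, Finset.sum_add_distrib]; ring

lemma Ecoef_shift_self (n i l k : ℕ) (u : ℕ × ℕ → ℂ) (hi : 1 ≤ i) (hl : 1 ≤ l)
    (hk : 1 ≤ k) (hk' : k ≤ n - i) :
    Ecoef n i l (u + eShift n i k)
      = Ecoef n i l u + ((if l < k then (1:ℂ) else 0) + (if l ≤ k then 1 else 0)) := by
  rw [Ecoef_add]
  congr 1
  simp only [eShift, mval_add, mval_sub, Finset.sum_add_distrib, Finset.sum_sub_distrib,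
    sum_mval_uvec_fst, eq_self_iff_true, true_and, and_true]
  have hn : i + k ≤ n := by omega
  split_ifs <;> (first | (exfalso; omega) | norm_num)
lemma Ecoef_cross1 (n i m k : ℕ) (u : ℕ × ℕ → ℂ) (hi : 1 ≤ i) (hm : 1 ≤ m)
    (hk : 1 ≤ k) (hk' : k ≤ n - i) :
    Ecoef n (i + 1) m (u + eShift n i k)
      = Ecoef n (i + 1) m u - (if m < k then (1:ℂ) else 0) := by
  rw [Ecoef_add]
  have hn : i + k ≤ n := by omega
  have h : (∑ j ∈ Icc m (n - (i+1)), mval n (eShift n i k) j (i + 1 + j))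
      = -(if m < k then (1:ℂ) else 0) := by
    simp only [eShift, mval_add, mval_sub, Finset.sum_add_distrib, Finset.sum_sub_distrib,
      sum_mval_uvec_fst, eq_self_iff_true, true_and, and_true]
    split_ifs <;> (first | (exfalso; omega) | norm_num)
  rw [h]; ring

lemma Ecoef_cross2 (n i l m : ℕ) (u : ℕ × ℕ → ℂ) (hi : 1 ≤ i) (hl : 1 ≤ l)
    (hm : 1 ≤ m) (hm' : m ≤ n - i - 1) :
    Ecoef n i l (u + eShift n (i + 1) m)
      = Ecoef n i l u - (if l ≤ m then (1:ℂ) else 0) := by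
  rw [Ecoef_add]
  have hn : i + m + 1 ≤ n := by omega
  have h : (∑ j ∈ Icc l (n - i), mval n (eShift n (i+1) m) j (i + j))
      = -(if l ≤ m then (1:ℂ) else 0) := by
    simp only [eShift, mval_add, mval_sub, Finset.sum_add_distrib, Finset.sum_sub_distrib,
      sum_mval_uvec_fst, eq_self_iff_true, true_and, and_true]
    split_ifs <;> (first | (exfalso; omega) | norm_num)
  rw [h]; ring

lemma Fcoef_add (n i l : ℕ) (lam : ℂ) (u w : ℕ × ℕ → ℂ) :
    Fcoef n i l lam (u + w) = Fcoef n i l lam u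
      + ((∑ j ∈ Icc l i, mval n w j i) - ∑ j ∈ Icc (i + 1) n, mval n w i j) := by
  simp only [Fcoef, mval_add, Finset.sum_add_distrib]; ring

lemma Fcoef_shift_self (n i l k : ℕ) (lam : ℂ) (u : ℕ × ℕ → ℂ) (hl : 1 ≤ l) (hl' : l ≤ i)
    (hk : 1 ≤ k) (hk' : k ≤ i) (hn : i + 1 ≤ n) :
    Fcoef n i l lam (u + fShift n i k)
      = Fcoef n i l lam u + ((if l < k then (1:ℂ) else 0) + (if l ≤ k then 1 else 0)) := by
  rw [Fcoef_add]
  have h1 : (∑ j ∈ Icc l i, mval n (fShift n i k) j i)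
      = (if l < k then (1:ℂ) else 0) + (if l ≤ k ∧ k < i then 1 else 0) := by
    simp only [fShift, mval_add, mval_sub, Finset.sum_add_distrib, Finset.sum_sub_distrib,
      sum_mval_uvec_fst, eq_self_iff_true, true_and, and_true]
    split_ifs <;> (first | (exfalso; omega) | norm_num)
  have h2 : (∑ j ∈ Icc (i + 1) n, mval n (fShift n i k) i j)
      = -(if k = i then (1:ℂ) else 0) := by
    simp only [fShift, mval_add, mval_sub, Finset.sum_add_distrib, Finset.sum_sub_distrib,
      sum_mval_uvec_snd, eq_self_iff_true, true_and, and_true]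
    split_ifs <;> (first | (exfalso; omega) | norm_num)
  rw [h1, h2]
  have h3 : (if l ≤ k ∧ k < i then (1:ℂ) else 0) + (if k = i then (1:ℂ) else 0)
      = (if l ≤ k then (1:ℂ) else 0) := by
    split_ifs <;> (first | (exfalso; omega) | norm_num)
  linear_combination h3

lemma Fcoef_cross1 (n i m k : ℕ) (lam : ℂ) (u : ℕ × ℕ → ℂ) (hm : 1 ≤ m)
    (hk : 1 ≤ k) (hk' : k ≤ i) (hn : i + 1 ≤ n) :
    Fcoef n (i + 1) m lam (u + fShift n i k)
      = Fcoef n (i + 1) m lam u - (if m ≤ k then (1:ℂ) else 0) := by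
  rw [Fcoef_add]
  have h1 : (∑ j ∈ Icc m (i + 1), mval n (fShift n i k) j (i + 1))
      = -(if m ≤ k then (1:ℂ) else 0) := by
    simp only [fShift, mval_add, mval_sub, Finset.sum_add_distrib, Finset.sum_sub_distrib,
      sum_mval_uvec_fst, eq_self_iff_true, true_and, and_true]
    split_ifs <;> (first | (exfalso; omega) | norm_num)
  have h2 : (∑ j ∈ Icc (i + 1 + 1) n, mval n (fShift n i k) (i + 1) j) = 0 := by
    simp only [fShift, mval_add, mval_sub, Finset.sum_add_distrib, Finset.sum_sub_distrib,
      sum_mval_uvec_snd, eq_self_iff_true, true_and, and_true]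
    split_ifs <;> (first | (exfalso; omega) | norm_num)
  rw [h1, h2]; ring

lemma Fcoef_cross2 (n i l m : ℕ) (lam : ℂ) (u : ℕ × ℕ → ℂ) (hl : 1 ≤ l) (hl' : l ≤ i)
    (hm : 1 ≤ m) (hm' : m ≤ i + 1) (hn : i + 2 ≤ n) :
    Fcoef n i l lam (u + fShift n (i + 1) m)
      = Fcoef n i l lam u - (if l < m then (1:ℂ) else 0) := by
  rw [Fcoef_add]
  have h1 : (∑ j ∈ Icc l i, mval n (fShift n (i + 1) m) j i)
      = -(if l < m ∧ m ≤ i then (1:ℂ) else 0) := by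
    simp only [fShift, mval_add, mval_sub, Finset.sum_add_distrib, Finset.sum_sub_distrib,
      sum_mval_uvec_fst, eq_self_iff_true, true_and, and_true]
    split_ifs <;> (first | (exfalso; omega) | norm_num)
  have h2 : (∑ j ∈ Icc (i + 1) n, mval n (fShift n (i + 1) m) i j)
      = (if m = i + 1 then (1:ℂ) else 0) := by
    simp only [fShift, mval_add, mval_sub, Finset.sum_add_distrib, Finset.sum_sub_distrib,
      sum_mval_uvec_snd, eq_self_iff_true, true_and, and_true]
    split_ifs <;> (first | (exfalso; omega) | norm_num)
  rw [h1, h2]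
  have : (if l < m ∧ m ≤ i then (1:ℂ) else 0) + (if m = i + 1 then (1:ℂ) else 0)
      = (if l < m then (1:ℂ) else 0) := by
    split_ifs <;> (first | (exfalso; omega) | norm_num)
  linear_combination -this

def op (s : Finset ℕ) (c : ℕ → (ℕ × ℕ → ℂ) → ℂ) (S : ℕ → (ℕ × ℕ → ℂ))
    (f : (ℕ × ℕ → ℂ) → ℂ) : (ℕ × ℕ → ℂ) → ℂ :=
  fun u => ∑ k ∈ s, c k u * f (u + S k)

lemma sum_antisymm (s : Finset ℕ) (G : ℕ → ℕ → ℂ)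
    (h : ∀ k ∈ s, ∀ l ∈ s, G k l + G l k = 0) :
    (∑ k ∈ s, ∑ l ∈ s, G k l) = 0 := by
  have h2 : (∑ k ∈ s, ∑ l ∈ s, G k l) + (∑ k ∈ s, ∑ l ∈ s, G k l) = 0 := by
    nth_rewrite 2 [Finset.sum_comm]
    rw [← Finset.sum_add_distrib]
    refine Finset.sum_eq_zero fun k hk => ?_
    rw [← Finset.sum_add_distrib]
    exact Finset.sum_eq_zero fun l hl => h k hk l hl
  linear_combination h2 / 2

lemma serre_general (s t : Finset ℕ) (a b : ℕ → (ℕ × ℕ → ℂ) → ℂ)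
    (S T : ℕ → (ℕ × ℕ → ℂ)) (sa pa qb : ℕ → ℕ → ℂ)
    (haS : ∀ l ∈ s, ∀ k ∈ s, ∀ u, a l (u + S k) = a l u + sa l k)
    (haT : ∀ l ∈ s, ∀ m ∈ t, ∀ u, a l (u + T m) = a l u - pa l m)
    (hbS : ∀ m ∈ t, ∀ k ∈ s, ∀ u, b m (u + S k) = b m u - qb m k)
    (h1 : ∀ l ∈ s, ∀ k ∈ s, ∀ m ∈ t, sa l k * (qb m k - qb m l) = 2 * pa l m * qb m k)
    (h3 : ∀ l ∈ s, ∀ k ∈ s, ∀ m ∈ t,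
      pa k m * sa l k + pa l m * sa k l = 2 * (pa l m * pa k m))
    (f : (ℕ × ℕ → ℂ) → ℂ) (u : ℕ × ℕ → ℂ) :
    op s a S (op s a S (op t b T f)) u - 2 * op s a S (op t b T (op s a S f)) u
      + op t b T (op s a S (op s a S f)) u = 0 := by
  have E1 : op s a S (op s a S (op t b T f)) u
      = ∑ k ∈ s, ∑ l ∈ s, ∑ m ∈ t,
          a k u * ((a l u + sa l k) * ((b m u - qb m k - qb m l)
            * f (u + S k + S l + T m))) := by
    simp only [op]
    refine Finset.sum_congr rfl fun k hk => ?_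
    rw [Finset.mul_sum]
    refine Finset.sum_congr rfl fun l hl => ?_
    rw [haS l hl k hk, Finset.mul_sum, Finset.mul_sum]
    refine Finset.sum_congr rfl fun m hm => ?_
    rw [hbS m hm l hl, hbS m hm k hk]
  have E2 : op s a S (op t b T (op s a S f)) u
      = ∑ k ∈ s, ∑ l ∈ s, ∑ m ∈ t,
          a k u * ((b m u - qb m k) * ((a l u + sa l k - pa l m)
            * f (u + S k + S l + T m))) := by
    simp only [op]
    refine Finset.sum_congr rfl fun k hk => ?_
    have step : a k u * (∑ m ∈ t, b m (u + S k)
          * ∑ l ∈ s, a l (u + S k + T m) * f (u + S k + T m + S l))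
        = ∑ m ∈ t, ∑ l ∈ s, a k u * ((b m u - qb m k) * ((a l u + sa l k - pa l m)
            * f (u + S k + S l + T m))) := by
      rw [Finset.mul_sum]
      refine Finset.sum_congr rfl fun m hm => ?_
      rw [hbS m hm k hk, Finset.mul_sum, Finset.mul_sum]
      refine Finset.sum_congr rfl fun l hl => ?_
      rw [haT l hl m hm, haS l hl k hk, add_right_comm (u + S k) (T m) (S l)]
    rw [step, Finset.sum_comm]
  have E3 : op t b T (op s a S (op s a S f)) u
      = ∑ k ∈ s, ∑ l ∈ s, ∑ m ∈ t,
          b m u * ((a k u - pa k m) * ((a l u - pa l m + sa l k)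
            * f (u + S k + S l + T m))) := by
    simp only [op]
    have step : (∑ m ∈ t, b m u * (∑ k ∈ s, a k (u + T m)
          * ∑ l ∈ s, a l (u + T m + S k) * f (u + T m + S k + S l)))
        = ∑ m ∈ t, ∑ k ∈ s, ∑ l ∈ s,
            b m u * ((a k u - pa k m) * ((a l u - pa l m + sa l k)
              * f (u + S k + S l + T m))) := by
      refine Finset.sum_congr rfl fun m hm => ?_
      rw [Finset.mul_sum]
      refine Finset.sum_congr rfl fun k hk => ?_
      rw [haT k hk m hm, Finset.mul_sum, Finset.mul_sum]
      refine Finset.sum_congr rfl fun l hl => ?_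
      rw [haS l hl k hk, haT l hl m hm, add_right_comm u (T m) (S k),
        add_right_comm (u + S k) (T m) (S l)]
    rw [step, Finset.sum_comm]
    exact Finset.sum_congr rfl fun k _ => Finset.sum_comm
  rw [E1, E2, E3]
  simp only [Finset.mul_sum]
  rw [← Finset.sum_sub_distrib, ← Finset.sum_add_distrib]
  have combined : ∀ k ∈ s, ∀ l ∈ s,
      ((∑ m ∈ t, a k u * ((a l u + sa l k) * ((b m u - qb m k - qb m l)
          * f (u + S k + S l + T m))))
        - (∑ m ∈ t, 2 * (a k u * ((b m u - qb m k) * ((a l u + sa l k - pa l m)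
          * f (u + S k + S l + T m)))))
        + (∑ m ∈ t, b m u * ((a k u - pa k m) * ((a l u - pa l m + sa l k)
          * f (u + S k + S l + T m)))))
      = ∑ m ∈ t,
          (a k u * ((a l u + sa l k) * ((b m u - qb m k - qb m l)
            * f (u + S k + S l + T m)))
          - 2 * (a k u * ((b m u - qb m k) * ((a l u + sa l k - pa l m)
            * f (u + S k + S l + T m))))
          + b m u * ((a k u - pa k m) * ((a l u - pa l m + sa l k)
            * f (u + S k + S l + T m)))) := by
    intro k _ l _
    rw [← Finset.sum_sub_distrib, ← Finset.sum_add_distrib]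
  have outer : ∀ k ∈ s,
      ((∑ l ∈ s, ∑ m ∈ t, a k u * ((a l u + sa l k) * ((b m u - qb m k - qb m l)
          * f (u + S k + S l + T m))))
        - (∑ l ∈ s, ∑ m ∈ t, 2 * (a k u * ((b m u - qb m k) * ((a l u + sa l k - pa l m)
          * f (u + S k + S l + T m)))))
        + (∑ l ∈ s, ∑ m ∈ t, b m u * ((a k u - pa k m) * ((a l u - pa l m + sa l k)
          * f (u + S k + S l + T m)))))
      = ∑ l ∈ s, ∑ m ∈ t,
          (a k u * ((a l u + sa l k) * ((b m u - qb m k - qb m l)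
            * f (u + S k + S l + T m)))
          - 2 * (a k u * ((b m u - qb m k) * ((a l u + sa l k - pa l m)
            * f (u + S k + S l + T m))))
          + b m u * ((a k u - pa k m) * ((a l u - pa l m + sa l k)
            * f (u + S k + S l + T m)))) := by
    intro k hk
    rw [← Finset.sum_sub_distrib, ← Finset.sum_add_distrib]
    exact Finset.sum_congr rfl fun l hl => combined k hk l hl
  rw [Finset.sum_congr rfl outer]
  refine sum_antisymm s _ fun k hk l hl => ?_
  rw [← Finset.sum_add_distrib]
  refine Finset.sum_eq_zero fun m hm => ?_
  have harg : f (u + S l + S k + T m) = f (u + S k + S l + T m) := by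
    rw [add_right_comm u (S l) (S k)]
  rw [harg]
  linear_combination
    (a k u * f (u + S k + S l + T m)) * h1 l hl k hk m hm
    + (a l u * f (u + S k + S l + T m)) * h1 k hk l hl m hm
    - (b m u * f (u + S k + S l + T m)) * h3 l hl k hk m hm


lemma pat1_h1 (l k m : ℕ) :
    ((if l < k then (1:ℂ) else 0) + (if l ≤ k then 1 else 0))
      * ((if m < k then (1:ℂ) else 0) - (if m < l then (1:ℂ) else 0))
    = 2 * (if l ≤ m then (1:ℂ) else 0) * (if m < k then (1:ℂ) else 0) := by
  split_ifs <;> (first | (exfalso; omega) | norm_num)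

lemma pat1_h3 (l k m : ℕ) :
    (if k ≤ m then (1:ℂ) else 0) * ((if l < k then (1:ℂ) else 0) + (if l ≤ k then 1 else 0))
      + (if l ≤ m then (1:ℂ) else 0)
        * ((if k < l then (1:ℂ) else 0) + (if k ≤ l then 1 else 0))
    = 2 * ((if l ≤ m then (1:ℂ) else 0) * (if k ≤ m then (1:ℂ) else 0)) := by
  split_ifs <;> (first | (exfalso; omega) | norm_num)

lemma pat2_h1 (l k m : ℕ) :
    ((if l < k then (1:ℂ) else 0) + (if l ≤ k then 1 else 0))
      * ((if m ≤ k then (1:ℂ) else 0) - (if m ≤ l then (1:ℂ) else 0))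
    = 2 * (if l < m then (1:ℂ) else 0) * (if m ≤ k then (1:ℂ) else 0) := by
  split_ifs <;> (first | (exfalso; omega) | norm_num)

lemma pat2_h3 (l k m : ℕ) :
    (if k < m then (1:ℂ) else 0) * ((if l < k then (1:ℂ) else 0) + (if l ≤ k then 1 else 0))
      + (if l < m then (1:ℂ) else 0)
        * ((if k < l then (1:ℂ) else 0) + (if k ≤ l then 1 else 0))
    = 2 * ((if l < m then (1:ℂ) else 0) * (if k < m then (1:ℂ) else 0)) := by
  split_ifs <;> (first | (exfalso; omega) | norm_num)

lemma Eop_op (n i : ℕ) (f : (ℕ × ℕ → ℂ) → ℂ) :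
    Eop n i f = op (Icc 1 (n - i)) (Ecoef n i) (eShift n i) f := rfl

lemma Fop_op (n i : ℕ) (lam : ℂ) (f : (ℕ × ℕ → ℂ) → ℂ) :
    Fop n i lam f = op (Icc 1 i) (fun k => Fcoef n i k lam) (fShift n i) f := rfl


/-- The Serre relations `E_i²E_{i+1} - 2E_iE_{i+1}E_i + E_{i+1}E_i² = 0` and
`E_{i+1}²E_i - 2E_{i+1}E_iE_{i+1} + E_iE_{i+1}² = 0` hold for the classical principal
series shift-operator action of `sl(n)`, and similarly for the `F_i`. -/
theorem serre_relations (n i : ℕ) (hn : 2 ≤ n)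
    (hi : 1 ≤ i) (hi' : i + 1 ≤ n - 1)
    (lam : ℕ → ℂ) (f : (ℕ × ℕ → ℂ) → ℂ) (u : ℕ × ℕ → ℂ) :
    Eop n i (Eop n i (Eop n (i + 1) f)) u
        - 2 * Eop n i (Eop n (i + 1) (Eop n i f)) u
        + Eop n (i + 1) (Eop n i (Eop n i f)) u = 0 ∧
    Eop n (i + 1) (Eop n (i + 1) (Eop n i f)) u
        - 2 * Eop n (i + 1) (Eop n i (Eop n (i + 1) f)) u
        + Eop n i (Eop n (i + 1) (Eop n (i + 1) f)) u = 0 ∧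
    Fop n i (lam i) (Fop n i (lam i) (Fop n (i + 1) (lam (i + 1)) f)) u
        - 2 * Fop n i (lam i) (Fop n (i + 1) (lam (i + 1)) (Fop n i (lam i) f)) u
        + Fop n (i + 1) (lam (i + 1)) (Fop n i (lam i) (Fop n i (lam i) f)) u = 0 ∧
    Fop n (i + 1) (lam (i + 1)) (Fop n (i + 1) (lam (i + 1)) (Fop n i (lam i) f)) u
        - 2 * Fop n (i + 1) (lam (i + 1)) (Fop n i (lam i) (Fop n (i + 1) (lam (i + 1)) f)) u
        + Fop n i (lam i) (Fop n (i + 1) (lam (i + 1)) (Fop n (i + 1) (lam (i + 1)) f)) u = 0 := by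
  have hE1 : 1 ≤ i + 1 := by omega
  have hn1 : i + 1 ≤ n := by omega
  have hn2 : i + 2 ≤ n := by omega
  refine ⟨?_, ?_, ?_, ?_⟩
  · simp only [Eop_op]
    refine serre_general (Icc 1 (n - i)) (Icc 1 (n - (i + 1)))
      (Ecoef n i) (Ecoef n (i + 1)) (eShift n i) (eShift n (i + 1))
      (fun l k => (if l < k then (1:ℂ) else 0) + (if l ≤ k then 1 else 0))
      (fun l m => if l ≤ m then (1:ℂ) else 0)
      (fun m k => if m < k then (1:ℂ) else 0)
      ?_ ?_ ?_ ?_ ?_ f u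
    · intro l hl k hk v
      rw [mem_Icc] at hl hk
      exact Ecoef_shift_self n i l k v hi hl.1 hk.1 hk.2
    · intro l hl m hm v
      rw [mem_Icc] at hl hm
      exact Ecoef_cross2 n i l m v hi hl.1 hm.1 (by omega)
    · intro m hm k hk v
      rw [mem_Icc] at hm hk
      exact Ecoef_cross1 n i m k v hi hm.1 hk.1 hk.2
    · intro l _ k _ m _
      exact pat1_h1 l k m
    · intro l _ k _ m _
      exact pat1_h3 l k m
  · simp only [Eop_op]
    refine serre_general (Icc 1 (n - (i + 1))) (Icc 1 (n - i))
      (Ecoef n (i + 1)) (Ecoef n i) (eShift n (i + 1)) (eShift n i)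
      (fun l k => (if l < k then (1:ℂ) else 0) + (if l ≤ k then 1 else 0))
      (fun l m => if l < m then (1:ℂ) else 0)
      (fun m k => if m ≤ k then (1:ℂ) else 0)
      ?_ ?_ ?_ ?_ ?_ f u
    · intro l hl k hk v
      rw [mem_Icc] at hl hk
      exact Ecoef_shift_self n (i + 1) l k v hE1 hl.1 hk.1 hk.2
    · intro l hl m hm v
      rw [mem_Icc] at hl hm
      exact Ecoef_cross1 n i l m v hi hl.1 hm.1 hm.2
    · intro m hm k hk v
      rw [mem_Icc] at hm hk
      exact Ecoef_cross2 n i m k v hi hm.1 hk.1 (by omega)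
    · intro l _ k _ m _
      exact pat2_h1 l k m
    · intro l _ k _ m _
      exact pat2_h3 l k m
  · simp only [Fop_op]
    refine serre_general (Icc 1 i) (Icc 1 (i + 1))
      (fun k => Fcoef n i k (lam i)) (fun m => Fcoef n (i + 1) m (lam (i + 1)))
      (fShift n i) (fShift n (i + 1))
      (fun l k => (if l < k then (1:ℂ) else 0) + (if l ≤ k then 1 else 0))
      (fun l m => if l < m then (1:ℂ) else 0)
      (fun m k => if m ≤ k then (1:ℂ) else 0)
      ?_ ?_ ?_ ?_ ?_ f u
    · intro l hl k hk v
      rw [mem_Icc] at hl hk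
      exact Fcoef_shift_self n i l k (lam i) v hl.1 hl.2 hk.1 hk.2 hn1
    · intro l hl m hm v
      rw [mem_Icc] at hl hm
      exact Fcoef_cross2 n i l m (lam i) v hl.1 hl.2 hm.1 hm.2 hn2
    · intro m hm k hk v
      rw [mem_Icc] at hm hk
      exact Fcoef_cross1 n i m k (lam (i + 1)) v hm.1 hk.1 hk.2 hn1
    · intro l _ k _ m _
      exact pat2_h1 l k m
    · intro l _ k _ m _
      exact pat2_h3 l k m
  · simp only [Fop_op]
    refine serre_general (Icc 1 (i + 1)) (Icc 1 i)
      (fun k => Fcoef n (i + 1) k (lam (i + 1))) (fun m => Fcoef n i m (lam i))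
      (fShift n (i + 1)) (fShift n i)
      (fun l k => (if l < k then (1:ℂ) else 0) + (if l ≤ k then 1 else 0))
      (fun l m => if l ≤ m then (1:ℂ) else 0)
      (fun m k => if m < k then (1:ℂ) else 0)
      ?_ ?_ ?_ ?_ ?_ f u
    · intro l hl k hk v
      rw [mem_Icc] at hl hk
      exact Fcoef_shift_self n (i + 1) l k (lam (i + 1)) v hl.1 hl.2 hk.1 hk.2 hn2
    · intro l hl m hm v
      rw [mem_Icc] at hl hm
      exact Fcoef_cross1 n i l m (lam (i + 1)) v hl.1 hm.1 hm.2 hn1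
    · intro m hm k hk v
      rw [mem_Icc] at hm hk
      exact Fcoef_cross2 n i m k (lam i) v hm.1 hm.2 hk.1 hk.2 hn2
    · intro l _ k _ m _
      exact pat1_h1 l k m
    · intro l _ k _ m _
      exact pat1_h3 l k m

end
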